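/- Let K be a commutative ring, S a multiplicative submonoid of K, φ a reduction function and δ an expansion function of ideals of K. Let Q be an ideal of K with Q ∩ S ≠ ∅, and let P be a φ-δ-S-primary ideal of K associated to s ∈ S. Assume φ is constant on ideals (φ(I) = φ(P) for every ideal I of K) and δ(Q·P) = δ(Q) ∩ δ(P). Then the product ideal Q·P is a φ-δ-S-primary ideal of K: (Q·P) ∩ S = ∅, and for every t ∈ Q ∩ S, Q·P is φ-δ-S-primary associated to t·s ∈ S, i.e., for all a, b ∈ K, ab ∈ (Q·P) \ φ(Q·P) implies (t·s)·a ∈ Q·P or (t·s)·b ∈ δ(Q·P). -/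

import Mathlib

/-- Let `Q` be an ideal with `Q ∩ S ≠ ∅` and `P` a `φ`-`δ`-`S`-primary ideal
associated to `s ∈ S`. If `φ` is constant on ideals and `δ(Q·P) = δ(Q) ⊓ δ(P)`, then
`Q·P` is a `φ`-`δ`-`S`-primary ideal of `K` associated to `t·s` for each `t ∈ Q ∩ S`. -/
theorem mul_phi_delta_S_primary {K : Type*} [CommRing K] (S : Submonoid K)
    (φ δ : Ideal K → Ideal K)
    (hφ1 : ∀ I, φ I ≤ I) (hφ2 : ∀ I J : Ideal K, I ≤ J → φ I ≤ φ J)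
    (hδ1 : ∀ I : Ideal K, I ≤ δ I) (hδ2 : ∀ I J : Ideal K, I ≤ J → δ I ≤ δ J)
    (P Q : Ideal K) (s : K) (hs : s ∈ S)
    (hproper : P ≠ ⊤) (hdisj : ∀ x ∈ S, x ∉ P)
    (hprimary : ∀ a b : K, a * b ∈ P → a * b ∉ φ P → s * a ∈ P ∨ s * b ∈ δ P)
    (hconst : ∀ I : Ideal K, φ I = φ P)
    (hQS : ∃ t, t ∈ Q ∧ t ∈ S)
    (hdelta : δ (Q * P) = δ Q ⊓ δ P) :
    (∀ x ∈ S, x ∉ Q * P) ∧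
      ∀ t : K, t ∈ Q → t ∈ S → ∀ a b : K,
        a * b ∈ Q * P → a * b ∉ φ (Q * P) →
        (t * s) * a ∈ Q * P ∨ (t * s) * b ∈ δ (Q * P) := by
  have hQPP : Q * P ≤ P := Ideal.mul_le_right
  refine ⟨fun x hx hxQP => hdisj x hx (hQPP hxQP), ?_⟩
  intro t htQ htS a b hab hnab
  have hab' : a * b ∈ P := hQPP hab
  have hnab' : a * b ∉ φ P := by rwa [hconst (Q * P)] at hnab
  rcases hprimary a b hab' hnab' with h | h
  · left
    have : t * (s * a) ∈ Q * P := Ideal.mul_mem_mul htQ h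
    rwa [← mul_assoc] at this
  · right
    rw [hdelta]
    constructor
    · exact Ideal.mul_mem_right _ _ (Ideal.mul_mem_right _ _ (hδ1 Q htQ))
    · have : t * (s * b) ∈ δ P := Ideal.mul_mem_left _ _ h
      rwa [← mul_assoc] at this
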